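/- arXiv:math/0502582 — 5 statements merged into one kernel-verified Lean document; each statement's English description precedes it below -/
import Mathlib

section
/- The improper integral ∫₀¹ dx/√(x − x³) converges and equals Γ(1/4)² / (2^{3/2}·π^{1/2}), where Γ is the real Gamma function. -/
open MeasureTheory Set Real

-- beta integrand real
noncomputable def bfun : ℝ → ℝ := fun t => t ^ (-(3/4) : ℝ) * (1 - t) ^ (-(1/2) : ℝ)

lemma beta_complex_int : IntegrableOn
    (fun x : ℝ => (x : ℂ) ^ ((1/4 : ℂ) - 1) * ((1 : ℂ) - x) ^ ((1/2 : ℂ) - 1)) (Ioo 0 1) := by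
  have h := Complex.betaIntegral_convergent (u := 1/4) (v := 1/2) (by norm_num) (by norm_num)
  rw [intervalIntegrable_iff] at h
  simp only [Set.uIoc_of_le (by norm_num : (0:ℝ) ≤ 1)] at h
  exact h.mono_set Ioo_subset_Ioc_self

lemma bfun_eq (x : ℝ) (hx : x ∈ Ioo (0:ℝ) 1) :
    ((bfun x : ℝ) : ℂ) = (x : ℂ) ^ ((1/4 : ℂ) - 1) * ((1 : ℂ) - x) ^ ((1/2 : ℂ) - 1) := by
  obtain ⟨h0, h1⟩ := hx
  rw [bfun, Complex.ofReal_mul, Complex.ofReal_cpow h0.le, Complex.ofReal_cpow (by linarith)]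
  push_cast
  norm_num

lemma beta_real : IntegrableOn bfun (Ioo 0 1) ∧
    ∫ t in Ioo (0:ℝ) 1, bfun t
      = Real.Gamma (1/4) * Real.Gamma (1/2) / Real.Gamma (3/4) := by
  have hmeas : MeasurableSet (Ioo (0:ℝ) 1) := measurableSet_Ioo
  have hint : IntegrableOn bfun (Ioo 0 1) := by
    have := beta_complex_int.re
    refine (IntegrableOn.congr_fun this ?_ hmeas)
    intro x hx
    have h := bfun_eq x hx
    simp only [RCLike.re_to_complex, ← h, Complex.ofReal_re]
  refine ⟨hint, ?_⟩
  have key : ((∫ t in Ioo (0:ℝ) 1, bfun t : ℝ) : ℂ)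
      = Complex.betaIntegral (1/4) (1/2) := by
    rw [Complex.betaIntegral, intervalIntegral.integral_of_le (by norm_num : (0:ℝ) ≤ 1),
      MeasureTheory.integral_Ioc_eq_integral_Ioo, ← setIntegral_congr_fun hmeas bfun_eq]
    exact (integral_ofReal (𝕜 := ℂ)).symm
  have hG : Complex.Gamma ((3:ℂ)/4) ≠ 0 := by
    apply Complex.Gamma_ne_zero
    intro m
    intro h
    have : ((3:ℂ)/4).re = (-(m:ℝ)) := by rw [h]; simp
    norm_num at this
    have := (Nat.cast_nonneg m : (0:ℝ) ≤ m)
    linarith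
  have hB : Complex.betaIntegral (1/4) (1/2)
      = Complex.Gamma (1/4) * Complex.Gamma (1/2) / Complex.Gamma (3/4) := by
    have := Complex.Gamma_mul_Gamma_eq_betaIntegral
      (s := 1/4) (t := 1/2) (by norm_num) (by norm_num)
    norm_num at this
    rw [eq_div_iff hG]
    linear_combination -this
  rw [hB] at key
  have : ((Real.Gamma (1/4) * Real.Gamma (1/2) / Real.Gamma (3/4) : ℝ) : ℂ)
      = Complex.Gamma (1/4) * Complex.Gamma (1/2) / Complex.Gamma (3/4) := by
    push_cast
    rw [← Complex.Gamma_ofReal, ← Complex.Gamma_ofReal, ← Complex.Gamma_ofReal]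
    norm_num
  rw [← this] at key
  exact_mod_cast key

/-- The lemniscatic integral: `∫₀¹ dx/√(x - x³) = Γ(1/4)² / (2^{3/2} π^{1/2})`. -/
theorem integral_one_div_sqrt_x_sub_x_cube :
    IntegrableOn (fun x : ℝ => 1 / Real.sqrt (x - x ^ 3)) (Set.Ioo 0 1) ∧
    ∫ x in Set.Ioo (0 : ℝ) 1, 1 / Real.sqrt (x - x ^ 3)
      = Real.Gamma (1 / 4) ^ 2 / ((2 : ℝ) ^ ((3 : ℝ) / 2) * Real.pi ^ ((1 : ℝ) / 2)) := by
  obtain ⟨hbint, hbval⟩ := beta_real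
  set g : ℝ → ℝ := fun x => 1 / Real.sqrt (x - x ^ 3) with hg
  have hmeas : MeasurableSet (Ioo (0:ℝ) 1) := measurableSet_Ioo
  have himg : Real.sqrt '' Ioo 0 1 = Ioo 0 1 := by
    ext y
    constructor
    · rintro ⟨t, ⟨ht0, ht1⟩, rfl⟩
      refine ⟨Real.sqrt_pos.mpr ht0, ?_⟩
      have := Real.sqrt_lt_sqrt ht0.le ht1
      simpa using this
    · rintro ⟨hy0, hy1⟩
      exact ⟨y ^ 2, ⟨by positivity, by nlinarith⟩, Real.sqrt_sq hy0.le⟩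
  have hderiv : ∀ t ∈ Ioo (0:ℝ) 1,
      HasDerivWithinAt Real.sqrt (1 / (2 * Real.sqrt t)) (Ioo 0 1) t :=
    fun t ht => (Real.hasDerivAt_sqrt (ne_of_gt ht.1)).hasDerivWithinAt
  have hinj : Set.InjOn Real.sqrt (Ioo 0 1) := fun a ha b hb h => by
    have := congrArg (fun x => x ^ 2) h
    simpa [Real.sq_sqrt ha.1.le, Real.sq_sqrt hb.1.le] using this
  have hpt : ∀ t ∈ Ioo (0:ℝ) 1,
      |1 / (2 * Real.sqrt t)| • g (Real.sqrt t) = (1/2) * bfun t := by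
    intro t ⟨ht0, ht1⟩
    have hst : Real.sqrt t = t ^ ((1:ℝ)/2) := Real.sqrt_eq_rpow t
    have h1t : (0:ℝ) < 1 - t := by linarith
    have harg : Real.sqrt t - Real.sqrt t ^ 3 = t ^ ((1:ℝ)/2) * (1 - t) := by
      rw [hst, ← Real.rpow_natCast (t ^ ((1:ℝ)/2)) 3, ← Real.rpow_mul ht0.le]
      rw [show ((1:ℝ)/2) * (3:ℕ) = 1/2 + 1 by push_cast; ring,
        Real.rpow_add ht0, Real.rpow_one]
      ring
    have hsqrt_arg : Real.sqrt (Real.sqrt t - Real.sqrt t ^ 3)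
        = t ^ ((1:ℝ)/4) * (1 - t) ^ ((1:ℝ)/2) := by
      rw [harg, Real.sqrt_mul (by positivity), Real.sqrt_eq_rpow (t ^ ((1:ℝ)/2)),
        Real.sqrt_eq_rpow (1 - t), ← Real.rpow_mul ht0.le]
      norm_num
    have h2 : (0:ℝ) < t ^ ((1:ℝ)/2) := Real.rpow_pos_of_pos ht0 _
    have h4 : (0:ℝ) < t ^ ((1:ℝ)/4) := Real.rpow_pos_of_pos ht0 _
    have h5 : (0:ℝ) < (1 - t) ^ ((1:ℝ)/2) := Real.rpow_pos_of_pos h1t _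
    have habs : |1 / (2 * Real.sqrt t)| = 1 / (2 * t ^ ((1:ℝ)/2)) := by
      rw [hst, abs_of_pos (by positivity)]
    rw [smul_eq_mul, habs, hg]
    simp only [hsqrt_arg]
    rw [bfun, Real.rpow_neg ht0.le, Real.rpow_neg h1t.le,
      show (3/4 : ℝ) = 1/2 + 1/4 by norm_num, Real.rpow_add ht0]
    field_simp
  have hiff := integrableOn_image_iff_integrableOn_abs_deriv_smul hmeas hderiv hinj g
  rw [himg] at hiff
  have hint2 : IntegrableOn (fun t => |1 / (2 * Real.sqrt t)| • g (Real.sqrt t)) (Ioo 0 1) := by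
    refine IntegrableOn.congr_fun (hbint.const_mul (1/2)) ?_ hmeas
    intro t ht
    exact (hpt t ht).symm
  refine ⟨hiff.mpr hint2, ?_⟩
  have hval : ∫ x in Ioo (0:ℝ) 1, g x
      = (1/2) * (Real.Gamma (1/4) * Real.Gamma (1/2) / Real.Gamma (3/4)) := by
    rw [← himg, integral_image_eq_integral_abs_deriv_smul hmeas hderiv hinj g,
      setIntegral_congr_fun hmeas hpt, integral_const_mul, hbval]
  rw [hval]
  -- numeric evaluation
  have hGhalf : Real.Gamma (1/2) = Real.sqrt π := Real.Gamma_one_half_eq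
  have hrefl : Real.Gamma (1/4) * Real.Gamma (3/4) = Real.sqrt 2 * π := by
    have h := Real.Gamma_mul_Gamma_one_sub (1/4)
    norm_num at h
    rw [show π * (1/4) = π/4 by ring, Real.sin_pi_div_four] at h
    rw [h, div_eq_iff (by positivity : (Real.sqrt 2 / 2 : ℝ) ≠ 0)]
    linear_combination (-π/2) * (Real.sq_sqrt (by norm_num : (0:ℝ) ≤ 2))
  have hG14 : (0:ℝ) < Real.Gamma (1/4) := Real.Gamma_pos_of_pos (by norm_num)
  have hG34 : (0:ℝ) < Real.Gamma (3/4) := Real.Gamma_pos_of_pos (by norm_num)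
  have h2 : ((2:ℝ)) ^ ((3:ℝ)/2) = 2 * Real.sqrt 2 := by
    rw [show (3:ℝ)/2 = 1 + 1/2 by norm_num, Real.rpow_add (by norm_num), Real.rpow_one,
      ← Real.sqrt_eq_rpow]
  have hpi : (π:ℝ) ^ ((1:ℝ)/2) = Real.sqrt π := (Real.sqrt_eq_rpow π).symm
  rw [h2, hpi, hGhalf]
  have hsp : (0:ℝ) < Real.sqrt π := Real.sqrt_pos.mpr Real.pi_pos
  have hs2 : (0:ℝ) < Real.sqrt 2 := by positivity
  have hππ : Real.sqrt π * Real.sqrt π = π := Real.mul_self_sqrt Real.pi_pos.le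
  have hG34eq : Real.Gamma (3/4) = Real.sqrt 2 * π / Real.Gamma (1/4) := by
    field_simp
    linarith [hrefl]
  rw [hG34eq]
  field_simp
  ring_nf
  linear_combination (1 : ℝ) * (Real.sq_sqrt Real.pi_pos.le)
end

section
/- The improper integral ∫₀¹ dx/√(1 − x³) converges and equals Γ(1/3)³ / (2^{4/3}·3^{1/2}·π), where Γ is the real Gamma function. -/
open MeasureTheory Real Set

noncomputable def betaFn (u : ℝ) : ℝ := u ^ (-(2:ℝ)/3) * (1 - u) ^ (-(1:ℝ)/2)

lemma betaFn_eq_complex {x : ℝ} (hx0 : 0 ≤ x) (hx1 : x ≤ 1) :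
    ((betaFn x : ℝ) : ℂ) = (x : ℂ) ^ ((1/3 : ℂ) - 1) * (1 - (x : ℂ)) ^ ((1/2 : ℂ) - 1) := by
  have h1 : ((1/3 : ℂ) - 1) = ((-(2:ℝ)/3 : ℝ) : ℂ) := by push_cast; ring
  have h2 : ((1/2 : ℂ) - 1) = ((-(1:ℝ)/2 : ℝ) : ℂ) := by push_cast; ring
  rw [betaFn, Complex.ofReal_mul, Complex.ofReal_cpow hx0, Complex.ofReal_cpow (by linarith),
    h1, h2]
  push_cast
  ring_nf

lemma betaFn_integrableOn : IntegrableOn betaFn (Ioc 0 1) := by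
  have hc := Complex.betaIntegral_convergent (u := 1/3) (v := 1/2) (by norm_num) (by norm_num)
  have hI : IntegrableOn (fun x : ℝ => (x : ℂ) ^ ((1/3 : ℂ) - 1) * (1 - (x : ℂ)) ^ ((1/2 : ℂ) - 1))
      (Ioc 0 1) := (intervalIntegrable_iff_integrableOn_Ioc_of_le zero_le_one).mp hc
  have hre := hI.re
  refine MeasureTheory.IntegrableOn.congr_fun hre (fun x hx => ?_) measurableSet_Ioc
  rw [← betaFn_eq_complex hx.1.le hx.2]
  simp

lemma betaFn_integral : ∫ u in Ioo (0:ℝ) 1, betaFn u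
    = Real.Gamma (1/3) * Real.Gamma (1/2) / Real.Gamma (5/6) := by
  have hb := Complex.Gamma_mul_Gamma_eq_betaIntegral (s := 1/3) (t := 1/2)
    (by norm_num) (by norm_num)
  have hbeta : Complex.betaIntegral (1/3) (1/2) = ((∫ u in Ioo (0:ℝ) 1, betaFn u : ℝ) : ℂ) := by
    rw [Complex.betaIntegral]
    rw [show (∫ u in Ioo (0:ℝ) 1, betaFn u) = ∫ u in (0:ℝ)..1, betaFn u by
      rw [intervalIntegral.integral_of_le zero_le_one, integral_Ioc_eq_integral_Ioo]]
    rw [← intervalIntegral.integral_ofReal]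
    refine intervalIntegral.integral_congr fun x hx => ?_
    rw [uIcc_of_le zero_le_one] at hx
    exact (betaFn_eq_complex hx.1 hx.2).symm
  rw [hbeta, show (1/3 + 1/2 : ℂ) = ((5/6 : ℝ) : ℂ) by norm_num,
    show (1/3 : ℂ) = ((1/3 : ℝ) : ℂ) by norm_num,
    show (1/2 : ℂ) = ((1/2 : ℝ) : ℂ) by norm_num, Complex.Gamma_ofReal, Complex.Gamma_ofReal,
    Complex.Gamma_ofReal] at hb
  have h56 : Real.Gamma (5/6) ≠ 0 := (Real.Gamma_pos_of_pos (by norm_num)).ne'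
  have : Real.Gamma (1/3) * Real.Gamma (1/2)
      = Real.Gamma (5/6) * ∫ u in Ioo (0:ℝ) 1, betaFn u := by
    exact_mod_cast hb
  rw [this]
  field_simp

lemma gamma_arith : Real.Gamma (1/3) * Real.Gamma (1/2) / Real.Gamma (5/6) / 3
    = Real.Gamma (1 / 3) ^ 3 / ((2 : ℝ) ^ ((4 : ℝ) / 3) * (3 : ℝ) ^ ((1 : ℝ) / 2) * Real.pi) := by
  have hA : 0 < Real.Gamma (1/3) := Real.Gamma_pos_of_pos (by norm_num)
  have hC : 0 < Real.Gamma (5/6) := Real.Gamma_pos_of_pos (by norm_num)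
  have hB : 0 < Real.Gamma (2/3) := Real.Gamma_pos_of_pos (by norm_num)
  have hdup := Real.Gamma_mul_Gamma_add_half (1/3)
  have hrefl := Real.Gamma_mul_Gamma_one_sub (1/3)
  rw [show (1/3 + 1/2 : ℝ) = 5/6 by norm_num, show (2 * (1/3) : ℝ) = 2/3 by norm_num,
    show (1 - 2/3 : ℝ) = 1/3 by norm_num] at hdup
  rw [show (1 - 1/3 : ℝ) = 2/3 by norm_num, show (π * (1/3)) = π/3 by ring,
    Real.sin_pi_div_three] at hrefl
  have h2 : (2:ℝ) ^ ((4:ℝ)/3) = 2 * (2:ℝ) ^ ((1:ℝ)/3) := by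
    rw [show ((4:ℝ)/3) = 1 + 1/3 by norm_num, Real.rpow_add two_pos, Real.rpow_one]
  have h3 : (3:ℝ) ^ ((1:ℝ)/2) = Real.sqrt 3 := (Real.sqrt_eq_rpow 3).symm
  have hs3 : Real.sqrt 3 * Real.sqrt 3 = 3 := Real.mul_self_sqrt (by norm_num)
  have hsπ : Real.sqrt π * Real.sqrt π = π := Real.mul_self_sqrt Real.pi_pos.le
  have hπ : (0:ℝ) < π := Real.pi_pos
  have hs3' : (0:ℝ) < Real.sqrt 3 := Real.sqrt_pos.mpr (by norm_num)
  have hsπ' : (0:ℝ) < Real.sqrt π := Real.sqrt_pos.mpr hπ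
  have h2' : (0:ℝ) < (2:ℝ) ^ ((1:ℝ)/3) := Real.rpow_pos_of_pos two_pos _
  rw [Real.Gamma_one_half_eq, h2, h3]
  rw [div_div, div_eq_div_iff (by positivity) (by positivity)]
  have hrefl' : Real.Gamma (1/3) * Real.Gamma (2/3) * Real.sqrt 3 = 2 * π := by
    rw [hrefl]; field_simp
  linear_combination (-3*Real.Gamma (1/3)^2) * hdup
    - (Real.Gamma (1/3) * (2:ℝ)^((1:ℝ)/3) * Real.sqrt π * Real.sqrt 3) * hrefl'
    + (Real.Gamma (1/3)^2 * Real.Gamma (2/3) * (2:ℝ)^((1:ℝ)/3) * Real.sqrt π) * hs3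

/-- `∫₀¹ dx/√(1 - x³) = Γ(1/3)³ / (2^{4/3} 3^{1/2} π)`. -/
theorem integral_one_div_sqrt_one_sub_x_cube :
    IntegrableOn (fun x : ℝ => 1 / Real.sqrt (1 - x ^ 3)) (Set.Ioo 0 1) ∧
    ∫ x in Set.Ioo (0 : ℝ) 1, 1 / Real.sqrt (1 - x ^ 3)
      = Real.Gamma (1 / 3) ^ 3 / ((2 : ℝ) ^ ((4 : ℝ) / 3) * (3 : ℝ) ^ ((1 : ℝ) / 2) * Real.pi) := by
  have himg : (fun x : ℝ => x ^ 3) '' Ioo 0 1 = Ioo 0 1 := by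
    ext y
    constructor
    · rintro ⟨x, ⟨hx0, hx1⟩, rfl⟩
      exact ⟨pow_pos hx0 3, pow_lt_one₀ hx0.le hx1 (by norm_num)⟩
    · rintro ⟨hy0, hy1⟩
      refine ⟨y ^ ((1:ℝ)/3), ⟨Real.rpow_pos_of_pos hy0 _,
        Real.rpow_lt_one hy0.le hy1 (by norm_num)⟩, ?_⟩
      show (y ^ ((1:ℝ)/3)) ^ 3 = y
      rw [← Real.rpow_natCast (y ^ ((1:ℝ)/3)) 3, ← Real.rpow_mul hy0.le]
      norm_num
  have hderiv : ∀ x ∈ Ioo (0:ℝ) 1, HasDerivWithinAt (fun x : ℝ => x ^ 3)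
      (3 * x ^ 2) (Ioo 0 1) x := by
    intro x _
    simpa using (hasDerivAt_pow 3 x).hasDerivWithinAt
  have hinj : InjOn (fun x : ℝ => x ^ 3) (Ioo 0 1) := by
    intro a ha b hb h
    exact (pow_left_strictMonoOn₀ (n := 3) (by norm_num)).injOn ha.1.le hb.1.le (by simpa using h)
  set g : ℝ → ℝ := fun u => (1/3) * betaFn u with hg
  have hkey : ∀ x ∈ Ioo (0:ℝ) 1, |3 * x ^ 2| • g (x ^ 3) = 1 / Real.sqrt (1 - x ^ 3) := by
    intro x ⟨hx0, hx1⟩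
    have hx3 : x ^ 3 < 1 := pow_lt_one₀ hx0.le hx1 (by norm_num)
    have h1x : (0:ℝ) < 1 - x ^ 3 := by linarith
    have hxp : (x ^ 3 : ℝ) ^ (-(2:ℝ)/3) = (x ^ 2)⁻¹ := by
      rw [← Real.rpow_natCast x 3, ← Real.rpow_mul hx0.le]
      norm_num
    have hsq : (1 - x ^ 3 : ℝ) ^ (-(1:ℝ)/2) = 1 / Real.sqrt (1 - x ^ 3) := by
      rw [show (-(1:ℝ)/2) = -(1/2) by norm_num, Real.rpow_neg h1x.le, ← Real.sqrt_eq_rpow,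
        one_div]
    have hx2 : (0:ℝ) < x ^ 2 := by positivity
    rw [smul_eq_mul, hg]
    simp only [betaFn, hxp, hsq]
    rw [abs_of_nonneg (by positivity)]
    field_simp
  have hInt : IntegrableOn g (Ioo 0 1) :=
    ((betaFn_integrableOn.mono_set Ioo_subset_Ioc_self).const_mul _)
  have hiff := integrableOn_image_iff_integrableOn_abs_deriv_smul measurableSet_Ioo hderiv hinj g
  rw [himg] at hiff
  have hInt2 : IntegrableOn (fun x => |3 * x ^ 2| • g (x ^ 3)) (Ioo 0 1) := hiff.mp hInt
  constructor
  · exact hInt2.congr_fun hkey measurableSet_Ioo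
  · have heq : ∫ x in Ioo (0:ℝ) 1, 1 / Real.sqrt (1 - x ^ 3)
        = ∫ x in Ioo (0:ℝ) 1, |3 * x ^ 2| • g (x ^ 3) :=
      (setIntegral_congr_fun measurableSet_Ioo fun x hx => (hkey x hx).symm)
    have hchg := integral_image_eq_integral_abs_deriv_smul measurableSet_Ioo hderiv hinj g
    rw [himg] at hchg
    rw [heq, ← hchg, hg]
    simp only [integral_const_mul]
    rw [betaFn_integral, ← gamma_arith]
    ring
end

section
/- Let a and b be complex numbers with a ≠ 0 and b/a not a nonpositive integer (i.e. b/a ∉ {0, −1, −2, …}), and let k ≥ 2 be an integer. Then the series ∑_{n=0}^∞ ∏_{j=0}^{k-1} 1/(a·n + b + j·a) converges and its sum equals (1/((k−1)·a)) · ∏_{i=0}^{k-2} 1/(i·a + b). -/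
open Filter Finset Asymptotics

private lemma norm_affine_ge {a : ℂ} (c : ℂ) (n : ℕ) :
    ‖a‖ * n - ‖c‖ ≤ ‖a * (n : ℂ) + c‖ := by
  have h : ‖a * (n : ℂ)‖ ≤ ‖a * (n : ℂ) + c‖ + ‖c‖ := by
    calc ‖a * (n : ℂ)‖ = ‖(a * (n : ℂ) + c) + (-c)‖ := by ring_nf
    _ ≤ ‖a * (n : ℂ) + c‖ + ‖(-c)‖ := norm_add_le _ _
    _ = ‖a * (n : ℂ) + c‖ + ‖c‖ := by rw [norm_neg]
  have h2 : ‖a * (n : ℂ)‖ = ‖a‖ * n := by rw [norm_mul]; simp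
  linarith

private lemma norm_affine_tendsto {a : ℂ} (ha : a ≠ 0) (c : ℂ) :
    Tendsto (fun n : ℕ => ‖a * (n : ℂ) + c‖) atTop atTop := by
  apply tendsto_atTop_mono (norm_affine_ge c)
  apply tendsto_atTop_add_const_right
  exact (tendsto_natCast_atTop_atTop (R := ℝ)).const_mul_atTop (norm_pos_iff.2 ha)

private lemma inv_affine_tendsto_zero {a : ℂ} (ha : a ≠ 0) (c : ℂ) :
    Tendsto (fun n : ℕ => (a * (n : ℂ) + c)⁻¹) atTop (nhds 0) := by
  rw [tendsto_zero_iff_norm_tendsto_zero]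
  simp only [norm_inv]
  exact (norm_affine_tendsto ha c).inv_tendsto_atTop

private lemma inv_affine_isBigO {a : ℂ} (ha : a ≠ 0) (c : ℂ) :
    (fun n : ℕ => (a * (n : ℂ) + c)⁻¹) =O[atTop] (fun n : ℕ => ((n : ℝ))⁻¹) := by
  have hA : 0 < ‖a‖ := norm_pos_iff.2 ha
  apply IsBigO.of_bound (2 / ‖a‖)
  filter_upwards [eventually_ge_atTop (⌈2 * ‖c‖ / ‖a‖⌉₊ + 1)] with n hn
  have hn1 : (1 : ℕ) ≤ n := le_trans (Nat.le_add_left 1 _) hn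
  have hnR : 2 * ‖c‖ / ‖a‖ ≤ (n : ℝ) := by
    calc 2 * ‖c‖ / ‖a‖ ≤ (⌈2 * ‖c‖ / ‖a‖⌉₊ : ℝ) := Nat.le_ceil _
    _ ≤ (n : ℝ) := by exact_mod_cast le_trans (Nat.le_add_right _ 1) hn
  have hnpos : (0 : ℝ) < n := by exact_mod_cast hn1
  have hc : ‖c‖ ≤ ‖a‖ * n / 2 := by
    rw [div_le_iff₀ hA] at hnR
    nlinarith
  have hlb : ‖a‖ * n / 2 ≤ ‖a * (n : ℂ) + c‖ := by
    have := norm_affine_ge (a := a) c n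
    linarith
  have hpos : 0 < ‖a * (n : ℂ) + c‖ := lt_of_lt_of_le (by positivity) hlb
  have hinv : (0 : ℝ) ≤ ((n : ℝ))⁻¹ := by positivity
  rw [norm_inv]
  calc ‖a * (n : ℂ) + c‖⁻¹ ≤ (‖a‖ * n / 2)⁻¹ := inv_anti₀ (by positivity) hlb
  _ = 2 / ‖a‖ * ((n : ℝ))⁻¹ := by field_simp
  _ = 2 / ‖a‖ * ‖((n : ℝ))⁻¹‖ := by rw [Real.norm_eq_abs, abs_of_nonneg hinv]

private lemma prod_inv_affine_isBigO {a : ℂ} (ha : a ≠ 0) (b : ℂ) (k : ℕ) :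
    (fun n : ℕ => ∏ j ∈ Finset.range k, (a * (n : ℂ) + b + (j : ℂ) * a)⁻¹)
      =O[atTop] (fun n : ℕ => (((n : ℝ))⁻¹) ^ k) := by
  induction k with
  | zero =>
      simp only [Finset.range_zero, Finset.prod_empty, pow_zero]
      apply IsBigO.of_bound 1
      simp
  | succ m ih =>
      have h1 : (fun n : ℕ => (a * (n : ℂ) + (b + (m : ℂ) * a))⁻¹)
          =O[atTop] (fun n : ℕ => ((n : ℝ))⁻¹) := inv_affine_isBigO ha _
      have hmul := ih.mul h1
      simp only [Finset.prod_range_succ, pow_succ]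
      have heq : ∀ n : ℕ, a * (n : ℂ) + b + (m : ℂ) * a = a * (n : ℂ) + (b + (m : ℂ) * a) :=
        fun n => by ring
      simp only [heq]
      exact hmul

/-- Telescoping series: for `a ≠ 0`, `b/a` not a nonpositive integer and `k ≥ 2`,
`∑_{n≥0} ∏_{j=0}^{k-1} 1/(an + b + ja) = (1/((k-1)a)) ∏_{i=0}^{k-2} 1/(ia + b)`. -/
theorem telescoping_series (a b : ℂ) (ha : a ≠ 0)
    (hba : ∀ m : ℤ, m ≤ 0 → b / a ≠ (m : ℂ)) (k : ℕ) (hk : 2 ≤ k) :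
    HasSum (fun n : ℕ => ∏ j ∈ Finset.range k, 1 / (a * (n : ℂ) + b + (j : ℂ) * a))
      (1 / (((k : ℂ) - 1) * a) * ∏ i ∈ Finset.range (k - 1), 1 / ((i : ℂ) * a + b)) := by
  -- nonvanishing
  have hne : ∀ (n j : ℕ), a * (n : ℂ) + b + (j : ℂ) * a ≠ 0 := by
    intro n j h
    apply hba (-(n + j)) (by omega)
    have hb : b = -a * ((n : ℂ) + j) := by linear_combination h
    rw [hb]
    field_simp
    push_cast
    ring
  set f : ℕ → ℂ := fun n => ∏ j ∈ Finset.range k, 1 / (a * (n : ℂ) + b + (j : ℂ) * a) with hf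
  set g : ℕ → ℂ := fun n => ∏ j ∈ Finset.range (k - 1), (a * (n : ℂ) + b + (j : ℂ) * a)⁻¹ with hg
  have hkk : k - 1 + 1 = k := by omega
  have hk1 : ((k : ℂ) - 1) * a ≠ 0 := by
    apply mul_ne_zero _ ha
    intro h
    have hkc : (k : ℂ) = 1 := by linear_combination h
    have : (k : ℕ) = 1 := by exact_mod_cast hkc
    omega
  have hcastk : ((k - 1 : ℕ) : ℂ) = (k : ℂ) - 1 := by
    have h1 : (1 : ℕ) ≤ k := by omega
    push_cast [Nat.cast_sub h1]
    ring
  -- telescoping identity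
  have key : ∀ n : ℕ, f n = (g n - g (n + 1)) * (((k : ℂ) - 1) * a)⁻¹ := by
    intro n
    have hQne : (∏ j ∈ Finset.range (k - 1), (a * (n : ℂ) + b + (j : ℂ) * a)) ≠ 0 :=
      Finset.prod_ne_zero_iff.2 fun j _ => hne n j
    have hPne : (∏ j ∈ Finset.range k, (a * (n : ℂ) + b + (j : ℂ) * a)) ≠ 0 :=
      Finset.prod_ne_zero_iff.2 fun j _ => hne n j
    have hlast : a * (n : ℂ) + b + ((k : ℂ) - 1) * a ≠ 0 := by
      have := hne n (k - 1)
      rwa [hcastk] at this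
    have hS : a * (n : ℂ) + b ≠ 0 := by
      have := hne n 0
      simpa using this
    have hQ'ne : (∏ j ∈ Finset.range (k - 1), (a * (n : ℂ) + b + ((j : ℂ) + 1) * a)) ≠ 0 := by
      apply Finset.prod_ne_zero_iff.2
      intro j _
      have h2 := hne n (j + 1)
      intro h
      apply h2
      push_cast
      linear_combination h
    have split1 : (∏ j ∈ Finset.range k, (a * (n : ℂ) + b + (j : ℂ) * a))
        = (∏ j ∈ Finset.range (k - 1), (a * (n : ℂ) + b + (j : ℂ) * a))
          * (a * (n : ℂ) + b + ((k : ℂ) - 1) * a) := by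
      conv_lhs => rw [← hkk]
      rw [Finset.prod_range_succ, hcastk]
    have split2 : (∏ j ∈ Finset.range k, (a * (n : ℂ) + b + (j : ℂ) * a))
        = (∏ j ∈ Finset.range (k - 1), (a * (n : ℂ) + b + ((j : ℂ) + 1) * a))
          * (a * (n : ℂ) + b) := by
      conv_lhs => rw [← hkk]
      rw [Finset.prod_range_succ']
      push_cast
      simp
    have hfP : f n = (∏ j ∈ Finset.range k, (a * (n : ℂ) + b + (j : ℂ) * a))⁻¹ := by
      simp only [hf, one_div]
      exact Finset.prod_inv_distrib (f := fun j : ℕ => a * (n : ℂ) + b + (j : ℂ) * a)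
    have hgn1 : g (n + 1) = ∏ j ∈ Finset.range (k - 1),
        (a * (n : ℂ) + b + ((j : ℂ) + 1) * a)⁻¹ := by
      simp only [hg]
      apply Finset.prod_congr rfl
      intro j _
      push_cast
      ring_nf
    have e1 : g n = (a * (n : ℂ) + b + ((k : ℂ) - 1) * a)
        * (∏ j ∈ Finset.range k, (a * (n : ℂ) + b + (j : ℂ) * a))⁻¹ := by
      simp only [hg, Finset.prod_inv_distrib]
      rw [split1, mul_inv]
      rw [mul_left_comm, mul_inv_cancel₀ hlast, mul_one]
    have e2 : g (n + 1) = (a * (n : ℂ) + b)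
        * (∏ j ∈ Finset.range k, (a * (n : ℂ) + b + (j : ℂ) * a))⁻¹ := by
      rw [hgn1, Finset.prod_inv_distrib, split2, mul_inv]
      field_simp
    rw [hfP, e1, e2]
    rw [← sub_mul]
    have hLS : a * (n : ℂ) + b + ((k : ℂ) - 1) * a - (a * (n : ℂ) + b) = ((k : ℂ) - 1) * a := by ring
    rw [hLS, mul_comm (((k : ℂ) - 1) * a), mul_assoc, mul_inv_cancel₀ hk1, mul_one]
  -- summability
  have hsummable : Summable f := by
    apply summable_of_isBigO_nat (g := fun n : ℕ => (((n : ℝ))⁻¹) ^ 2)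
    · apply Summable.congr (Real.summable_one_div_nat_pow.2 one_lt_two)
      intro n
      rw [one_div, inv_pow]
    · have h1 : f = fun n : ℕ => ∏ j ∈ Finset.range k,
          (a * (n : ℂ) + b + (j : ℂ) * a)⁻¹ := by
        funext n
        simp [hf, one_div]
      rw [h1]
      apply (prod_inv_affine_isBigO ha b k).trans
      apply IsBigO.of_bound 1
      filter_upwards [eventually_ge_atTop 1] with n hn
      have hn1 : (1 : ℝ) ≤ n := by exact_mod_cast hn
      have h0 : ((n : ℝ))⁻¹ ≤ 1 := by
        rw [inv_le_one_iff₀]; right; exact hn1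
      have hinv : (0 : ℝ) ≤ ((n : ℝ))⁻¹ := by positivity
      rw [Real.norm_eq_abs, Real.norm_eq_abs, abs_of_nonneg (by positivity),
        abs_of_nonneg (by positivity), one_mul]
      exact pow_le_pow_of_le_one hinv h0 hk
  -- limit of g
  have hgzero : Tendsto g atTop (nhds 0) := by
    have hT : Tendsto g atTop (nhds (∏ _j ∈ Finset.range (k - 1), (0 : ℂ))) := by
      apply tendsto_finset_prod
      intro j _
      exact Filter.Tendsto.congr (fun n => by ring_nf)
        (inv_affine_tendsto_zero ha (b + (j : ℂ) * a))
    rwa [Finset.prod_const, Finset.card_range, zero_pow (by omega)] at hT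
  -- partial sums
  have hsum : ∀ N : ℕ, ∑ n ∈ Finset.range N, f n = (g 0 - g N) * (((k : ℂ) - 1) * a)⁻¹ := by
    intro N
    calc ∑ n ∈ Finset.range N, f n
        = ∑ n ∈ Finset.range N, (g n - g (n + 1)) * (((k : ℂ) - 1) * a)⁻¹ :=
          Finset.sum_congr rfl (fun n _ => key n)
      _ = (∑ n ∈ Finset.range N, (g n - g (n + 1))) * (((k : ℂ) - 1) * a)⁻¹ := by
          rw [Finset.sum_mul]
      _ = (g 0 - g N) * (((k : ℂ) - 1) * a)⁻¹ := by rw [Finset.sum_range_sub']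
  have hg0 : g 0 = ∏ i ∈ Finset.range (k - 1), 1 / ((i : ℂ) * a + b) := by
    simp only [hg, Nat.cast_zero, mul_zero, zero_add, one_div]
    exact Finset.prod_congr rfl fun j _ => by rw [add_comm]
  rw [Summable.hasSum_iff_tendsto_nat hsummable]
  have htarget : 1 / (((k : ℂ) - 1) * a) * ∏ i ∈ Finset.range (k - 1), 1 / ((i : ℂ) * a + b)
      = (g 0 - 0) * (((k : ℂ) - 1) * a)⁻¹ := by
    rw [sub_zero, hg0, one_div, mul_comm]
  rw [htarget]
  simp only [hsum]
  exact (tendsto_const_nhds.sub hgzero).mul tendsto_const_nhds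
end

section
/- Let a be a nonzero complex number, h ≥ 0 an integer, and x a complex number such that x + j·a ≠ 0 for every integer j with 0 ≤ j ≤ h. Then ∏_{j=0}^{h} 1/(x + j·a) = (1/a^h) · ∑_{i=0}^{h} ((−1)^i/(i!·(h−i)!)) · 1/(x + i·a). -/
open Finset

lemma pfd_sum_step (h : ℕ) (u : ℕ → ℂ) :
    ((h : ℂ) + 1) * ∑ i ∈ range (h + 2),
        ((-1 : ℂ) ^ i / ((Nat.factorial i : ℂ) * (Nat.factorial (h + 1 - i) : ℂ))) * u i
      = (∑ i ∈ range (h + 1),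
          ((-1 : ℂ) ^ i / ((Nat.factorial i : ℂ) * (Nat.factorial (h - i) : ℂ))) * u i)
        - ∑ i ∈ range (h + 1),
          ((-1 : ℂ) ^ i / ((Nat.factorial i : ℂ) * (Nat.factorial (h - i) : ℂ))) * u (i + 1) := by
  have hf : ∀ n : ℕ, ((Nat.factorial n : ℂ)) ≠ 0 :=
    fun n => Nat.cast_ne_zero.mpr (Nat.factorial_ne_zero n)
  rw [Finset.mul_sum]
  rw [Finset.sum_range_succ' (fun i => ((h:ℂ)+1) * (((-1:ℂ)^i / ((Nat.factorial i : ℂ) * (Nat.factorial (h+1-i) : ℂ))) * u i)) (h+1)]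
  rw [Finset.sum_range_succ]
  rw [Finset.sum_range_succ' (fun i => ((-1:ℂ)^i / ((Nat.factorial i : ℂ) * (Nat.factorial (h-i) : ℂ))) * u i) h]
  rw [Finset.sum_range_succ (fun i => ((-1:ℂ)^i / ((Nat.factorial i : ℂ) * (Nat.factorial (h-i) : ℂ))) * u (i+1)) h]
  have hmid : ∀ i ∈ range h,
      ((h:ℂ)+1) * (((-1:ℂ)^(i+1) / ((Nat.factorial (i+1) : ℂ) * (Nat.factorial (h+1-(i+1)) : ℂ))) * u (i+1))
      = ((-1:ℂ)^(i+1) / ((Nat.factorial (i+1) : ℂ) * (Nat.factorial (h-(i+1)) : ℂ))) * u (i+1)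
        - ((-1:ℂ)^i / ((Nat.factorial i : ℂ) * (Nat.factorial (h-i) : ℂ))) * u (i+1) := by
    intro i hi
    simp only [Finset.mem_range] at hi
    obtain ⟨m, rfl⟩ : ∃ m, h = i + m + 1 := ⟨h - (i+1), by omega⟩
    have e1 : i + m + 1 + 1 - (i+1) = m + 1 := by omega
    have e2 : i + m + 1 - (i+1) = m := by omega
    have e3 : i + m + 1 - i = m + 1 := by omega
    rw [e1, e2, e3]
    have hD1 : ((Nat.factorial (i+1) : ℂ) * (Nat.factorial (m+1) : ℂ)) ≠ 0 :=
      mul_ne_zero (hf _) (hf _)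
    have hD2 : ((Nat.factorial (i+1) : ℂ) * (Nat.factorial m : ℂ)) ≠ 0 :=
      mul_ne_zero (hf _) (hf _)
    have hD3 : ((Nat.factorial i : ℂ) * (Nat.factorial (m+1) : ℂ)) ≠ 0 :=
      mul_ne_zero (hf _) (hf _)
    have hc : ((i:ℂ)+(m:ℂ)+1+1) * ((-1:ℂ)^(i+1) / ((Nat.factorial (i+1) : ℂ) * (Nat.factorial (m+1) : ℂ)))
        = (-1:ℂ)^(i+1) / ((Nat.factorial (i+1) : ℂ) * (Nat.factorial m : ℂ))
          - (-1:ℂ)^i / ((Nat.factorial i : ℂ) * (Nat.factorial (m+1) : ℂ)) := by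
      rw [div_sub_div _ _ hD2 hD3, ← mul_div_assoc, div_eq_div_iff hD1 (mul_ne_zero hD2 hD3)]
      rw [Nat.factorial_succ i, Nat.factorial_succ m]
      push_cast
      ring
    push_cast
    linear_combination hc * u (i + 1)
  rw [Finset.sum_congr rfl hmid, Finset.sum_sub_distrib]
  have A : ((h:ℂ)+1) * ((-1:ℂ)^(h+1) / ((Nat.factorial (h+1) : ℂ) * (Nat.factorial (h+1-(h+1)) : ℂ)))
      = -((-1:ℂ)^h / ((Nat.factorial h : ℂ) * (Nat.factorial (h-h) : ℂ))) := by
    rw [Nat.sub_self, Nat.sub_self, Nat.factorial_succ, Nat.factorial_zero]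
    have hh : ((h:ℂ)+1) ≠ 0 := by norm_cast
    have := hf h
    push_cast
    field_simp
    ring
  have B : ((h:ℂ)+1) * ((-1:ℂ)^0 / ((Nat.factorial 0 : ℂ) * (Nat.factorial (h+1-0) : ℂ)))
      = (-1:ℂ)^0 / ((Nat.factorial 0 : ℂ) * (Nat.factorial (h-0) : ℂ)) := by
    simp only [Nat.sub_zero, Nat.factorial_succ, Nat.factorial_zero, Nat.cast_one, one_mul, pow_zero]
    have hh : ((h:ℂ)+1) ≠ 0 := by norm_cast
    have := hf h
    push_cast
    field_simp
  push_cast at A B ⊢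
  linear_combination A * u (h+1) + B * u 0

/-- Partial fraction decomposition:
`∏_{j=0}^{h} 1/(x + ja) = (1/aʰ) ∑_{i=0}^{h} ((-1)ⁱ/(i!(h-i)!)) · 1/(x + ia)`. -/
theorem partial_fraction_decomposition (a : ℂ) (ha : a ≠ 0) (h : ℕ) (x : ℂ)
    (hx : ∀ j : ℕ, j ≤ h → x + (j : ℂ) * a ≠ 0) :
    ∏ j ∈ Finset.range (h + 1), 1 / (x + (j : ℂ) * a)
      = (1 / a ^ h) * ∑ i ∈ Finset.range (h + 1),
          ((-1 : ℂ) ^ i / ((Nat.factorial i : ℂ) * (Nat.factorial (h - i) : ℂ)))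
            * (1 / (x + (i : ℂ) * a)) := by
  induction h generalizing x with
  | zero => simp
  | succ h ih =>
    have hx0 : x ≠ 0 := by have := hx 0 (Nat.zero_le _); simpa using this
    have hxh : x + ((h : ℂ) + 1) * a ≠ 0 := by
      have := hx (h + 1) le_rfl; push_cast at this; exact this
    have hh1 : ((h : ℂ) + 1) ≠ 0 := by norm_cast
    have ih1 := ih x (fun j hj => hx j (by omega))
    have ih2 := ih (x + a) (fun j hj => by
      have h2 := hx (j + 1) (by omega)
      push_cast at h2
      have e : x + a + (j : ℂ) * a = x + ((j : ℂ) + 1) * a := by ring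
      rw [e]; exact h2)
    -- the shifted product
    have e2 : ∏ j ∈ Finset.range (h + 1), 1 / (x + a + (j : ℂ) * a)
        = (∏ j ∈ Finset.range (h + 1), 1 / (x + (j : ℂ) * a))
          * (1 / (x + ((h : ℂ) + 1) * a)) * x := by
      rw [Finset.prod_range_succ (fun j => 1 / (x + a + (j : ℂ) * a)) h,
        Finset.prod_range_succ' (fun j => 1 / (x + (j : ℂ) * a)) h]
      have : ∀ j ∈ Finset.range h, 1 / (x + a + (j : ℂ) * a) = 1 / (x + ((j : ℕ) + 1 : ℕ) * a) := by
        intro j hj; push_cast; ring_nf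
      rw [Finset.prod_congr rfl this]
      push_cast
      field_simp
      have hp : ∏ x_1 ∈ range h, 1 / (x + ((x_1 : ℂ) + 1) * a) = ∏ x_1 ∈ range h, 1 / (x + a * ((x_1 : ℂ) + 1)) :=
        Finset.prod_congr rfl (fun _ _ => by ring_nf)
      rw [hp, mul_zero, add_zero, show x + a + a * (h:ℂ) = x + a * ((h:ℂ)+1) from by ring, mul_div_mul_left _ _ hx0]
    have ih2' : ∏ j ∈ Finset.range (h + 1), 1 / (x + a + (j : ℂ) * a)
        = (1 / a ^ h) * ∑ i ∈ Finset.range (h + 1),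
            ((-1 : ℂ) ^ i / ((Nat.factorial i : ℂ) * (Nat.factorial (h - i) : ℂ)))
              * (1 / (x + ((i : ℂ) + 1) * a)) := by
      rw [ih2]
      congr 1
      refine Finset.sum_congr rfl fun i _ => ?_
      congr 2
      ring
    have hstep := pfd_sum_step h (fun i => 1 / (x + (i : ℂ) * a))
    push_cast at hstep
    set P := ∏ j ∈ Finset.range (h + 1), 1 / (x + (j : ℂ) * a) with hP
    have key : P * (1 / (x + ((h : ℂ) + 1) * a))
        = (1 / (((h : ℂ) + 1) * a)) * (P - P * (1 / (x + ((h : ℂ) + 1) * a)) * x) := by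
      field_simp
      ring
    rw [Finset.prod_range_succ]
    push_cast
    rw [key, ← e2, ih1, ih2']
    rw [← mul_sub, ← hstep]
    simp only [show h + 1 + 1 = h + 2 from rfl]
    field_simp
    ring
end

section
/- The series ∑_{n=0}^∞ 1/(n² + 1) converges and its sum equals 1/2 + (π/2) · (e^π + e^{−π})/(e^π − e^{−π}). -/
open Real Complex MeasureTheory intervalIntegral

noncomputable section

lemma neg_pi_lt : -Real.pi < -Real.pi + 2 * Real.pi := by linarith [Real.pi_pos]

lemma exp_int_pi (m : ℤ) : Complex.exp (m * (Real.pi * Complex.I)) = (-1 : ℂ) ^ m := by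
  rw [Complex.exp_int_mul, Complex.exp_pi_mul_I]

lemma coeff_cosh (n : ℤ) :
    fourierCoeffOn neg_pi_lt (fun x : ℝ => (Real.cosh x : ℂ)) n
      = (-1 : ℂ) ^ n * Real.sinh Real.pi / (Real.pi * (1 + (n : ℂ) ^ 2)) := by
  have hπ : (Real.pi : ℂ) ≠ 0 := Complex.ofReal_ne_zero.mpr Real.pi_ne_zero
  have h1 : (1 - (n : ℂ) * Complex.I) ≠ 0 := by
    intro h
    have := congrArg Complex.re h
    simp at this
  have h2 : (-1 - (n : ℂ) * Complex.I) ≠ 0 := by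
    intro h
    have := congrArg Complex.re h
    simp at this
  rw [fourierCoeffOn_eq_integral]
  have hb : -Real.pi + 2 * Real.pi = Real.pi := by ring
  rw [hb]
  have key : Set.EqOn
      (fun x : ℝ => (fourier (-n) (x : AddCircle (Real.pi - -Real.pi)) : ℂ) • (Real.cosh x : ℂ))
      (fun x : ℝ => (Complex.exp ((1 - n * Complex.I) * x)
        + Complex.exp ((-1 - n * Complex.I) * x)) / 2)
      (Set.uIcc (-Real.pi) Real.pi) := by
    intro x _
    simp only [smul_eq_mul, fourier_coe_apply, Complex.ofReal_cosh, Complex.cosh,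
      Complex.ofReal_sub, Complex.ofReal_neg]
    rw [← mul_div_assoc, mul_add, ← Complex.exp_add, ← Complex.exp_add]
    congr 2 <;>
    · congr 1
      push_cast
      linear_combination (-(Complex.I * (n:ℂ) * (x:ℂ))) * (mul_inv_cancel₀ hπ)
  rw [intervalIntegral.integral_congr key]
  have hint1 : IntervalIntegrable (fun x : ℝ => Complex.exp ((1 - n * Complex.I) * x))
      volume (-Real.pi) Real.pi :=
    (Complex.continuous_exp.comp (continuous_const.mul Complex.continuous_ofReal)).intervalIntegrable _ _
  have hint2 : IntervalIntegrable (fun x : ℝ => Complex.exp ((-1 - n * Complex.I) * x))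
      volume (-Real.pi) Real.pi :=
    (Complex.continuous_exp.comp (continuous_const.mul Complex.continuous_ofReal)).intervalIntegrable _ _
  simp_rw [div_eq_mul_inv, intervalIntegral.integral_mul_const,
    intervalIntegral.integral_add hint1 hint2, integral_exp_mul_complex h1,
    integral_exp_mul_complex h2]
  have e1 : (1 - (n : ℂ) * Complex.I) * (Real.pi : ℂ) = Real.pi + ((-n : ℤ) : ℂ) * (Real.pi * Complex.I) := by push_cast; ring
  have e2 : (1 - (n : ℂ) * Complex.I) * ((-Real.pi : ℝ) : ℂ) = -Real.pi + ((n : ℤ) : ℂ) * (Real.pi * Complex.I) := by push_cast; ring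
  have e3 : (-1 - (n : ℂ) * Complex.I) * (Real.pi : ℂ) = -Real.pi + ((-n : ℤ) : ℂ) * (Real.pi * Complex.I) := by push_cast; ring
  have e4 : (-1 - (n : ℂ) * Complex.I) * ((-Real.pi : ℝ) : ℂ) = Real.pi + ((n : ℤ) : ℂ) * (Real.pi * Complex.I) := by push_cast; ring
  rw [e1, e2, e3, e4, Complex.exp_add, Complex.exp_add, Complex.exp_add, Complex.exp_add,
    exp_int_pi, exp_int_pi]
  have hneg : ((-1 : ℂ) ^ (-n) : ℂ) = (-1 : ℂ) ^ n := by
    rw [zpow_neg, ← inv_zpow, inv_neg, inv_one]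
  rw [hneg]
  have hsinh : ((Real.sinh Real.pi : ℝ) : ℂ)
      = (Complex.exp Real.pi - Complex.exp (-(Real.pi : ℂ))) / 2 := by
    rw [Complex.ofReal_sinh, Complex.sinh]
  rw [hsinh]
  have hfac : (1 + (n : ℂ) ^ 2) = (1 - n * Complex.I) * (1 + n * Complex.I) := by
    linear_combination ((n : ℂ) ^ 2) * Complex.I_sq
  have h3 : (1 + (n : ℂ) ^ 2) ≠ 0 := by
    rw [hfac]
    refine mul_ne_zero h1 ?_
    intro h
    have := congrArg Complex.re h
    simp at this
  have hexp : Complex.exp (-(Real.pi : ℂ)) = (Complex.exp ((-Real.pi : ℝ) : ℂ)) := by push_cast; ring_nf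
  have q1 : (Complex.exp (Real.pi:ℂ) * (-1)^n - Complex.exp (-(Real.pi:ℂ)) * (-1)^n) / (1 - (n:ℂ) * Complex.I)
      = (-1:ℂ)^n * (Complex.exp (Real.pi:ℂ) - Complex.exp (-(Real.pi:ℂ))) * (1 + (n:ℂ) * Complex.I) / (1 + (n:ℂ)^2) := by
    rw [div_eq_div_iff h1 h3]
    linear_combination ((-1:ℂ)^n * (Complex.exp (Real.pi:ℂ) - Complex.exp (-(Real.pi:ℂ))) * (n:ℂ)^2) * Complex.I_sq
  have q2 : (Complex.exp (-(Real.pi:ℂ)) * (-1)^n - Complex.exp (Real.pi:ℂ) * (-1)^n) / (-1 - (n:ℂ) * Complex.I)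
      = (-1:ℂ)^n * (Complex.exp (Real.pi:ℂ) - Complex.exp (-(Real.pi:ℂ))) * (1 - (n:ℂ) * Complex.I) / (1 + (n:ℂ)^2) := by
    rw [div_eq_div_iff h2 h3]
    linear_combination (-((-1:ℂ)^n * (Complex.exp (Real.pi:ℂ) - Complex.exp (-(Real.pi:ℂ))) * (n:ℂ)^2)) * Complex.I_sq
  rw [q1, q2, Complex.real_smul]
  push_cast
  have h4 : ((Real.pi:ℂ) * 4 + (Real.pi:ℂ) * (n:ℂ)^2 * 4) ≠ 0 := by
    have he : ((Real.pi:ℂ) * 4 + (Real.pi:ℂ) * (n:ℂ)^2 * 4) = (Real.pi:ℂ) * (1 + (n:ℂ)^2) * 4 := by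
      ring
    rw [he]
    exact mul_ne_zero (mul_ne_zero hπ h3) (by norm_num)
  field_simp
  ring

lemma summable_nat_aux : Summable (fun n : ℕ => 1 / (1 + (n : ℝ) ^ 2)) := by
  have hs : Summable (fun n : ℕ => 2 * (1 / ((n : ℝ) + 1) ^ 2)) := by
    have := (summable_nat_add_iff 1).mpr
      ((summable_one_div_nat_pow (p := 2)).mpr one_lt_two)
    push_cast at this
    exact this.mul_left 2
  refine Summable.of_nonneg_of_le (fun n => by positivity) (fun n => ?_) hs
  rw [mul_one_div, div_le_div_iff₀ (by positivity) (by positivity)]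
  nlinarith [sq_nonneg ((n : ℝ) - 1)]

lemma summable_int_aux : Summable (fun n : ℤ => 1 / (1 + (n : ℝ) ^ 2)) := by
  apply Summable.of_nat_of_neg_add_one
  · simp only [Int.cast_natCast]
    exact summable_nat_aux
  · refine Summable.of_nonneg_of_le (fun n => by positivity) (fun n => ?_) summable_nat_aux
    push_cast
    rw [div_le_div_iff₀ (by positivity) (by positivity)]
    nlinarith [sq_nonneg ((n : ℝ)), Nat.cast_nonneg (α := ℝ) n]

end

/-- `∑_{n≥0} 1/(n²+1) = 1/2 + (π/2)·(e^π + e^{-π})/(e^π - e^{-π})`. -/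
theorem sum_one_div_sq_add_one :
    HasSum (fun n : ℕ => 1 / ((n : ℝ) ^ 2 + 1))
      (1 / 2 + Real.pi / 2 *
        ((Real.exp Real.pi + Real.exp (-Real.pi))
          / (Real.exp Real.pi - Real.exp (-Real.pi)))) := by
  haveI : Fact (0 < 2 * Real.pi) := ⟨by positivity⟩
  have hπ0 : Real.pi ≠ 0 := Real.pi_ne_zero
  have hs0 : Real.sinh Real.pi ≠ 0 := ne_of_gt (Real.sinh_pos_iff.mpr Real.pi_pos)
  set g : ℝ → ℂ := fun x => (Real.cosh x : ℂ) with hg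
  have hg_end : g (-Real.pi) = g (-Real.pi + 2 * Real.pi) := by
    have : -Real.pi + 2 * Real.pi = Real.pi := by ring
    simp [hg, this, Real.cosh_neg]
  have hg_cont : ContinuousOn g (Set.Icc (-Real.pi) (-Real.pi + 2 * Real.pi)) :=
    (Complex.continuous_ofReal.comp Real.continuous_cosh).continuousOn
  set F : C(AddCircle (2 * Real.pi), ℂ) :=
    ⟨AddCircle.liftIco (2 * Real.pi) (-Real.pi) g,
      AddCircle.liftIco_continuous hg_end hg_cont⟩ with hF
  have hcoeff : ∀ n : ℤ, fourierCoeff (⇑F) n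
      = (-1 : ℂ) ^ n * Real.sinh Real.pi / (Real.pi * (1 + (n : ℂ) ^ 2)) := by
    intro n
    have h1 : (⇑F) = AddCircle.liftIco (2 * Real.pi) (-Real.pi) g := rfl
    rw [h1, fourierCoeff_liftIco_eq]
    exact coeff_cosh n
  have hnorm : ∀ n : ℤ, ‖fourierCoeff (⇑F) n‖
      = Real.sinh Real.pi / (Real.pi * (1 + (n : ℝ) ^ 2)) := by
    intro n
    rw [hcoeff n]
    have hcast : Real.pi * (1 + (n : ℂ) ^ 2) = ((Real.pi * (1 + (n : ℝ) ^ 2) : ℝ) : ℂ) := by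
      push_cast; ring
    rw [hcast, norm_div, norm_mul, norm_zpow, norm_neg, norm_one, one_zpow, one_mul,
      Complex.norm_real, Complex.norm_real, Real.norm_eq_abs, Real.norm_eq_abs,
      abs_of_pos (Real.sinh_pos_iff.mpr Real.pi_pos), abs_of_pos (by positivity)]
  have hsummable : Summable (fourierCoeff (⇑F)) := by
    apply Summable.of_norm
    have h2 : Summable (fun n : ℤ => Real.sinh Real.pi / Real.pi * (1 / (1 + (n : ℝ) ^ 2))) :=
      summable_int_aux.mul_left _
    refine h2.congr fun n => ?_
    rw [hnorm n]
    field_simp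
  have hpt := has_pointwise_sum_fourier_series_of_summable hsummable
    (((-Real.pi : ℝ) : AddCircle (2 * Real.pi)))
  have hFval : F (((-Real.pi : ℝ) : AddCircle (2 * Real.pi))) = (Real.cosh Real.pi : ℂ) := by
    have h1 : F (((-Real.pi : ℝ) : AddCircle (2 * Real.pi)))
        = AddCircle.liftIco (2 * Real.pi) (-Real.pi) g ((-Real.pi : ℝ)) := rfl
    rw [h1, AddCircle.liftIco_coe_apply]
    · simp [hg, Real.cosh_neg]
    · exact ⟨le_refl _, by linarith [Real.pi_pos]⟩
  have hfour : ∀ i : ℤ, (fourier i (((-Real.pi : ℝ) : AddCircle (2 * Real.pi))) : ℂ)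
      = (-1 : ℂ) ^ i := by
    intro i
    rw [fourier_coe_apply]
    have hπ : (Real.pi : ℂ) ≠ 0 := Complex.ofReal_ne_zero.mpr Real.pi_ne_zero
    have harg : 2 * (Real.pi : ℂ) * Complex.I * i * ((-Real.pi : ℝ) : ℂ) / ((2 * Real.pi : ℝ) : ℂ)
        = ((-i : ℤ) : ℂ) * (Real.pi * Complex.I) := by
      push_cast
      rw [div_eq_iff (mul_ne_zero two_ne_zero hπ)]
      ring
    rw [harg, exp_int_pi, zpow_neg, ← inv_zpow, inv_neg, inv_one]
  have h1 : HasSum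
      (fun i : ℤ => ((Real.sinh Real.pi / (Real.pi * (1 + (i : ℝ) ^ 2)) : ℝ) : ℂ))
      ((Real.cosh Real.pi : ℝ) : ℂ) := by
    rw [hFval] at hpt
    refine HasSum.congr_fun hpt fun i => ?_
    have hcoeff2 := hcoeff i
    rw [hcoeff2, hfour i, smul_eq_mul]
    have hsq : (-1 : ℂ) ^ i * (-1 : ℂ) ^ i = 1 := by
      rw [← mul_zpow]
      norm_num
    push_cast
    rw [Complex.ofReal_sinh] at hcoeff2
    linear_combination (-(Complex.sinh (Real.pi : ℂ) / ((Real.pi : ℂ) * (1 + (i : ℂ) ^ 2)))) * hsq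
  rw [Complex.hasSum_ofReal] at h1
  have h2 := h1.mul_left (Real.pi / Real.sinh Real.pi)
  have h3 : HasSum (fun i : ℤ => 1 / (1 + (i : ℝ) ^ 2))
      (Real.pi / Real.sinh Real.pi * Real.cosh Real.pi) := by
    refine HasSum.congr_fun h2 fun i => ?_
    have h8 : 1 + (i : ℝ) ^ 2 ≠ 0 := by positivity
    field_simp
  have h4 := h3.nat_add_neg
  have h5 := h4.mul_left (1 / 2)
  have hval : (1 / 2 : ℝ) * (Real.pi / Real.sinh Real.pi * Real.cosh Real.pi + 1 / (1 + ((0 : ℤ) : ℝ) ^ 2))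
      = 1 / 2 + Real.pi / 2 *
        ((Real.exp Real.pi + Real.exp (-Real.pi)) / (Real.exp Real.pi - Real.exp (-Real.pi))) := by
    have hee : Real.exp Real.pi - Real.exp (-Real.pi) ≠ 0 := by
      have : Real.exp (-Real.pi) < Real.exp Real.pi :=
        Real.exp_lt_exp.mpr (by linarith [Real.pi_pos])
      linarith
    rw [Real.cosh_eq, Real.sinh_eq]
    have hs2 : Real.exp Real.pi - Real.exp (-Real.pi) > 0 := by
      have : Real.exp (-Real.pi) < Real.exp Real.pi :=
        Real.exp_lt_exp.mpr (by linarith [Real.pi_pos])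
      linarith
    field_simp
    ring
  rw [hval] at h5
  refine HasSum.congr_fun h5 fun n => ?_
  have h7 : ((n : ℝ)) ^ 2 + 1 ≠ 0 := by positivity
  push_cast
  rw [neg_sq]
  field_simp
  ring
end
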